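/- Let w ∈ W^Γ, and suppose K ⊆ S is the union of two distinct orbits I, J ∈ S̄, and that l(sw) < l(w) for all s ∈ K. Then the parabolic subgroup W_K is finite, and writing w = ux with u ∈ W_K, x a distinguished right coset representative of W_K (i.e. l(sx) > l(x) for all s ∈ K) and l(w) = l(u) + l(x), one has u = w_K ∈ W^Γ and x ∈ W^Γ. -/

import Mathlib

open CoxeterSystem List

namespace CoxAux

open scoped Classical

section InvolPair

variable {G : Type*} [Group G] {a b : G}

theorem conj_eq_iff (x t c : G) : x * t * x⁻¹ = c ↔ t = x⁻¹ * c * x := by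
  constructor
  · intro h; rw [← h]; simp [mul_assoc]
  · intro h; rw [h]; simp [mul_assoc]

theorem invol_inv (hb : b * b = 1) : b⁻¹ = b :=
  inv_eq_of_mul_eq_one_right hb

theorem conj_invol_eq_iff (hb : b * b = 1) (X c : G) : b * X * b = c ↔ X = b * c * b := by
  have h := conj_eq_iff b X c
  rw [invol_inv hb] at h
  exact h

theorem invol_comm_pow (hq : (a * b)⁻¹ = b * a) :
    ∀ m : ℕ, b * (a * b) ^ m = ((a * b) ^ m)⁻¹ * b
  | 0 => by simp
  | (m + 1) => by
    have h1 : b * (a * b) = (a * b)⁻¹ * b := by rw [hq, mul_assoc]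
    rw [pow_succ', ← mul_assoc, h1, mul_assoc, invol_comm_pow hq m, ← mul_assoc,
      ← mul_inv_rev, ← pow_succ, pow_succ']

theorem invol_key1 (hq : (a * b)⁻¹ = b * a) (m : ℕ) :
    ((a * b) ^ m)⁻¹ * b * (a * b) ^ m = ((a * b) ^ (2 * m))⁻¹ * b := by
  rw [mul_assoc, invol_comm_pow hq m, ← mul_assoc, ← mul_inv_rev, ← pow_add, two_mul]

theorem invol_key2 (hq : (a * b)⁻¹ = b * a) (m : ℕ) :
    ((a * b) ^ m)⁻¹ * (b * a * b) * (a * b) ^ m = ((a * b) ^ (2 * m + 1))⁻¹ * b := by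
  have h1 : b * a * b = (a * b)⁻¹ * b := by rw [hq, mul_assoc]
  have h2 : ((a*b)^m)⁻¹ * ((a*b)⁻¹ * b) * (a*b)^m
      = (((a*b)^m)⁻¹ * (a*b)⁻¹) * (b * (a*b)^m) := by simp [mul_assoc]
  rw [h1, h2, invol_comm_pow hq m,
    show (((a*b)^m)⁻¹ * (a*b)⁻¹) * (((a*b)^m)⁻¹ * b)
      = (((a*b)^m)⁻¹ * (a*b)⁻¹ * ((a*b)^m)⁻¹) * b from by simp [mul_assoc]]
  congr 1
  rw [← mul_inv_rev, ← mul_inv_rev]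
  congr 1
  rw [← pow_succ', ← pow_add]
  congr 1
  ring

end InvolPair

variable {B W : Type*} [Group W] {M : CoxeterMatrix B} (cs : CoxeterSystem M W)

local prefix:100 "ss" => cs.simple
local prefix:100 "π" => cs.wordProd
local prefix:100 "ℓ" => cs.length

open scoped Classical in
/-- The basic involution on `W × ZMod 2` attached to a simple reflection. -/
noncomputable def etaFun (i : B) : W × ZMod 2 → W × ZMod 2 :=
  fun p => (ss i * p.1 * ss i, p.2 + if p.1 = ss i then 1 else 0)

theorem etaFun_invol (i : B) : Function.Involutive (etaFun cs i) := by
  classical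
  intro p
  simp only [etaFun]
  have hb : ss i * ss i = 1 := cs.simple_mul_simple_self i
  have h2 : (ss i * p.1 * ss i = ss i) ↔ (p.1 = ss i) := by
    rw [conj_invol_eq_iff hb, hb, one_mul]
  have h1 : ss i * (ss i * p.1 * ss i) * ss i = p.1 := by
    rw [← mul_assoc, ← mul_assoc, hb, one_mul, mul_assoc, hb, mul_one]
  refine Prod.ext h1 ?_
  show p.2 + _ + _ = p.2
  by_cases hc : p.1 = ss i
  · rw [if_pos hc]
    simp only [h2, if_pos hc]
    rw [add_assoc, show (1 : ZMod 2) + 1 = 0 by decide, add_zero]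
  · rw [if_neg hc]
    simp only [h2, if_neg hc]
    rw [add_zero, add_zero]

/-- The permutation of `W × ZMod 2` attached to a simple reflection. -/
noncomputable def eta (i : B) : Equiv.Perm (W × ZMod 2) := (etaFun_invol cs i).toPerm

open scoped Classical in
theorem eta_apply (i : B) (p : W × ZMod 2) :
    eta cs i p = (ss i * p.1 * ss i, p.2 + if p.1 = ss i then 1 else 0) := by
  simp [eta, Function.Involutive.toPerm, etaFun]

open scoped Classical in
theorem eta_mul_pow_apply (i i' : B) (k : ℕ) (t : W) (e : ZMod 2) :
    ((eta cs i * eta cs i') ^ k) (t, e) =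
      ((ss i * ss i') ^ k * t * ((ss i * ss i') ^ k)⁻¹,
        e + ∑ n ∈ Finset.range (2 * k),
          (if t = ((ss i * ss i') ^ n)⁻¹ * ss i' then (1 : ZMod 2) else 0)) := by
  have ha : ss i * ss i = 1 := cs.simple_mul_simple_self i
  have hb : ss i' * ss i' = 1 := cs.simple_mul_simple_self i'
  have hq : ((ss i * ss i')⁻¹ : W) = ss i' * ss i := by
    rw [mul_inv_rev, cs.inv_simple, cs.inv_simple]
  induction k with
  | zero => simp
  | succ k ih =>
    rw [pow_succ', Equiv.Perm.mul_apply, ih, Equiv.Perm.mul_apply, eta_apply, eta_apply]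
    simp only
    have c1 : ((ss i * ss i') ^ k * t * ((ss i * ss i') ^ k)⁻¹ = ss i')
        ↔ (t = ((ss i * ss i') ^ (2 * k))⁻¹ * ss i') := by
      rw [conj_eq_iff, invol_key1 hq]
    have c2 : (ss i' * ((ss i * ss i') ^ k * t * ((ss i * ss i') ^ k)⁻¹) * ss i' = ss i)
        ↔ (t = ((ss i * ss i') ^ (2 * k + 1))⁻¹ * ss i') := by
      rw [conj_invol_eq_iff hb, conj_eq_iff, invol_key2 hq]
    refine Prod.ext ?_ ?_
    · show ss i * (ss i' * ((ss i * ss i') ^ k * t * ((ss i * ss i') ^ k)⁻¹) * ss i') * ss i = _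
      rw [pow_succ' (ss i * ss i'), mul_inv_rev, hq]
      simp [mul_assoc]
    · show _ + _ + _ = _
      rw [if_congr c1 rfl rfl, if_congr c2 rfl rfl,
        show 2 * (k + 1) = 2 * k + 1 + 1 by ring, Finset.sum_range_succ, Finset.sum_range_succ]
      ring

open scoped Classical in
theorem eta_liftable : M.IsLiftable (eta cs) := by
  intro i i'
  rcases eq_or_ne (M i i') 0 with h | h
  · rw [h, pow_zero]
  · refine Equiv.ext fun p => ?_
    obtain ⟨t, e⟩ := p
    rw [Equiv.Perm.one_apply, eta_mul_pow_apply]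
    refine Prod.ext ?_ ?_
    · show (ss i * ss i') ^ M i i' * t * ((ss i * ss i') ^ M i i')⁻¹ = t
      rw [cs.simple_mul_simple_pow i i', inv_one, one_mul, mul_one]
    · show e + ∑ n ∈ Finset.range (2 * M i i'),
          (if t = ((ss i * ss i') ^ n)⁻¹ * ss i' then (1 : ZMod 2) else 0) = e
      have hsum : ∑ n ∈ Finset.range (2 * M i i'),
          (if t = ((ss i * ss i') ^ n)⁻¹ * ss i' then (1 : ZMod 2) else 0) = 0 := by
        rw [two_mul, Finset.sum_range_add]
        have heq : ∀ n, ((ss i * ss i') ^ (M i i' + n))⁻¹ = ((ss i * ss i') ^ n)⁻¹ := by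
          intro n
          rw [pow_add, cs.simple_mul_simple_pow i i', one_mul]
        have : ∀ n ∈ Finset.range (M i i'),
            (if t = ((ss i * ss i') ^ (M i i' + n))⁻¹ * ss i' then (1 : ZMod 2) else 0)
            = (if t = ((ss i * ss i') ^ n)⁻¹ * ss i' then (1 : ZMod 2) else 0) := by
          intro n _
          rw [heq n]
        rw [Finset.sum_congr rfl this]
        have two : ∀ x : ZMod 2, x + x = 0 := by decide
        exact two _
      rw [hsum, add_zero]

/-- The sign representation on `W × ZMod 2`. -/
noncomputable def phi : W →* Equiv.Perm (W × ZMod 2) :=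
  cs.lift ⟨eta cs, eta_liftable cs⟩

theorem phi_simple (i : B) : phi cs (ss i) = eta cs i :=
  cs.lift_apply_simple (eta_liftable cs) i

open scoped Classical in
theorem phi_wordProd (ω : List B) (t : W) (e : ZMod 2) :
    phi cs (π ω) (t, e) =
      (π ω * t * (π ω)⁻¹, e + ((cs.leftInvSeq ω.reverse).count t : ZMod 2)) := by
  induction ω generalizing t e with
  | nil => simp
  | cons i ω ih =>
    rw [wordProd_cons, map_mul, Equiv.Perm.mul_apply, ih, phi_simple, eta_apply]
    simp only
    have hrev : (i :: ω).reverse = ω.reverse.concat i := by simp [List.concat_eq_append]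
    rw [hrev, cs.leftInvSeq_concat]
    rw [List.concat_eq_append, List.count_append]
    refine Prod.ext ?_ ?_
    · show ss i * (π ω * t * (π ω)⁻¹) * ss i = _
      rw [mul_inv_rev, cs.inv_simple]
      simp [mul_assoc]
    · show e + _ + _ = _
      have hπ : π ω.reverse = (π ω)⁻¹ := cs.wordProd_reverse ω
      have hcount : (List.count t [π ω.reverse * ss i * (π ω.reverse)⁻¹] : ℕ)
          = if π ω * t * (π ω)⁻¹ = ss i then 1 else 0 := by
        rw [hπ, inv_inv]
        by_cases hc : π ω * t * (π ω)⁻¹ = ss i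
        · rw [if_pos hc]
          have h5 : (π ω)⁻¹ * ss i * π ω = t := by
            rw [← hc]; simp [mul_assoc]
          rw [h5]; simp
        · rw [if_neg hc]
          refine List.count_eq_zero.2 ?_
          intro hmem
          rw [List.mem_singleton] at hmem
          apply hc
          rw [hmem]
          simp [mul_assoc]
      rw [hcount]
      push_cast
      ring

theorem phi_inv_wordProd (ω : List B) (t : W) (e : ZMod 2) :
    phi cs (π ω)⁻¹ (t, e) =
      ((π ω)⁻¹ * t * π ω, e + ((cs.leftInvSeq ω).count t : ZMod 2)) := by
  have h := phi_wordProd cs ω.reverse t e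
  rw [cs.wordProd_reverse, List.reverse_reverse, inv_inv] at h
  exact h

theorem simple_mem_leftInvSeq (i : B) (ω : List B) (hr : cs.IsReduced ω)
    (hd : ℓ (ss i * π ω) < ℓ (π ω)) : ss i ∈ cs.leftInvSeq ω := by
  by_contra hni
  have h0 : (cs.leftInvSeq ω).count (ss i) = 0 := List.count_eq_zero.2 hni
  obtain ⟨ω₂, hω₂r, hω₂⟩ := cs.exists_reduced_word' (ss i * π ω)
  have route2 : (phi cs (ss i * π ω)⁻¹ (ss i, (0 : ZMod 2))).2
      = ((cs.leftInvSeq ω₂).count (ss i) : ZMod 2) := by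
    rw [hω₂, phi_inv_wordProd]
    simp
  have route1 : (phi cs (ss i * π ω)⁻¹ (ss i, (0 : ZMod 2))).2 = 1 := by
    rw [mul_inv_rev, cs.inv_simple, map_mul, Equiv.Perm.mul_apply, phi_simple, eta_apply]
    simp only [if_pos rfl]
    rw [cs.simple_mul_simple_self, one_mul, zero_add, phi_inv_wordProd cs ω, h0]
    simp
  rw [route1] at route2
  have hmem : ss i ∈ cs.leftInvSeq ω₂ := by
    by_contra hni2
    rw [List.count_eq_zero.2 hni2] at route2
    simp at route2
  have hinv := cs.isLeftInversion_of_mem_leftInvSeq hω₂r hmem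
  rw [← hω₂] at hinv
  have h6 : ℓ (ss i * (ss i * π ω)) < ℓ (ss i * π ω) := hinv.2
  rw [← mul_assoc, cs.simple_mul_simple_self, one_mul] at h6
  omega

theorem simple_exchange_left (i : B) (ω : List B) (hr : cs.IsReduced ω)
    (hd : ℓ (ss i * π ω) < ℓ (π ω)) :
    ∃ j < ω.length, ss i * π ω = π (ω.eraseIdx j) := by
  have hmem := simple_mem_leftInvSeq cs i ω hr hd
  obtain ⟨j, hj, hget⟩ := List.mem_iff_getElem.1 hmem
  refine ⟨j, by simpa using hj, ?_⟩
  have : (cs.leftInvSeq ω).getD j 1 = ss i := by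
    rw [List.getD_eq_getElem _ _ hj, hget]
  rw [← this, cs.getD_leftInvSeq_mul_wordProd]

theorem simple_exchange_right (i : B) (ω : List B) (hr : cs.IsReduced ω)
    (hd : ℓ (π ω * ss i) < ℓ (π ω)) :
    ∃ ω', ω'.length + 1 = ω.length ∧ (∀ b ∈ ω', b ∈ ω) ∧ π ω' = π ω * ss i := by
  have hd' : ℓ (ss i * π ω.reverse) < ℓ (π ω.reverse) := by
    rw [cs.wordProd_reverse]
    have h1 : ss i * (π ω)⁻¹ = (π ω * ss i)⁻¹ := by
      rw [mul_inv_rev, cs.inv_simple]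
    rw [h1, cs.length_inv, cs.length_inv]
    exact hd
  obtain ⟨j, hj, hex⟩ := simple_exchange_left cs i ω.reverse
    ((cs.isReduced_reverse_iff ω).2 hr) hd'
  refine ⟨(ω.reverse.eraseIdx j).reverse, ?_, ?_, ?_⟩
  · rw [List.length_reverse, List.length_eraseIdx_add_one (by simpa using hj)]
    simp
  · intro b hb
    rw [List.mem_reverse] at hb
    have := List.mem_of_mem_eraseIdx hb
    simpa using this
  · rw [cs.wordProd_reverse, ← hex, mul_inv_rev, cs.inv_simple, cs.wordProd_reverse, inv_inv]

theorem delete_of_not_reduced (ω : List B) (h : ¬ cs.IsReduced ω) :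
    ∃ ω', ω'.length < ω.length ∧ (∀ b ∈ ω', b ∈ ω) ∧ π ω' = π ω := by
  have hne : ω ≠ [] := by
    rintro rfl
    exact h (by simp [CoxeterSystem.IsReduced])
  have hlen : 0 < ω.length := List.length_pos_iff.2 hne
  have hex : ∃ k, ¬ cs.IsReduced (ω.take (k + 1)) := by
    refine ⟨ω.length - 1, ?_⟩
    rwa [Nat.sub_add_cancel hlen, List.take_length]
  set k := Nat.find hex with hkdef
  have hk : ¬ cs.IsReduced (ω.take (k + 1)) := Nat.find_spec hex
  have hkle : k ≤ ω.length - 1 := Nat.find_min' hex (by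
    rwa [Nat.sub_add_cancel hlen, List.take_length])
  have hklt : k < ω.length := by omega
  have htkred : cs.IsReduced (ω.take k) := by
    rcases Nat.eq_zero_or_pos k with h0 | h0
    · rw [h0, List.take_zero]
      show ℓ (π []) = ([] : List B).length
      simp
    · have := Nat.find_min hex (m := k - 1) (by omega)
      rw [not_not] at this
      have hkk : k - 1 + 1 = k := by omega
      rwa [hkk] at this
  have hsplit : ω.take (k + 1) = ω.take k ++ [ω[k]] := by
    rw [List.take_succ, List.getElem?_eq_getElem hklt]
    rfl
  have hzlen : ℓ (π (ω.take k)) = k := by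
    have h1 : ℓ (π (ω.take k)) = (ω.take k).length := htkred
    rw [h1, List.length_take]
    omega
  have hdesc : ℓ (π (ω.take k) * ss ω[k]) < ℓ (π (ω.take k)) := by
    rcases cs.length_mul_simple (π (ω.take k)) ω[k] with h1 | h1
    · exfalso
      apply hk
      show ℓ (π (ω.take (k+1))) = (ω.take (k+1)).length
      rw [hsplit, wordProd_append, wordProd_singleton, h1, hzlen, List.length_append,
        List.length_take]
      simp
      omega
    · omega
  obtain ⟨ω₁, hlen₁, hmem₁, hprod₁⟩ := simple_exchange_right cs ω[k] (ω.take k) htkred hdesc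
  refine ⟨ω₁ ++ ω.drop (k + 1), ?_, ?_, ?_⟩
  · rw [List.length_append, List.length_drop, List.length_take] at *
    omega
  · intro b hb
    rcases List.mem_append.1 hb with h1 | h1
    · exact List.mem_of_mem_take (hmem₁ b h1)
    · exact List.mem_of_mem_drop h1
  · rw [wordProd_append, hprod₁]
    calc π (ω.take k) * ss ω[k] * π (ω.drop (k + 1))
        = π (ω.take (k + 1)) * π (ω.drop (k + 1)) := by
          rw [hsplit, wordProd_append, wordProd_singleton]
      _ = π ω := by rw [← wordProd_append, List.take_append_drop]

theorem exists_reduced_subword (ω : List B) :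
    ∃ ω', cs.IsReduced ω' ∧ (∀ b ∈ ω', b ∈ ω) ∧ π ω' = π ω := by
  obtain ⟨n, hn⟩ : ∃ n, ω.length ≤ n := ⟨ω.length, le_refl _⟩
  induction n generalizing ω with
  | zero =>
    have : ω = [] := List.eq_nil_of_length_eq_zero (by omega)
    subst this
    exact ⟨[], by show ℓ (π []) = ([] : List B).length; simp, by simp, rfl⟩
  | succ n ih =>
    by_cases hred : cs.IsReduced ω
    · exact ⟨ω, hred, fun b hb => hb, rfl⟩
    · obtain ⟨ω₁, h1, h2, h3⟩ := delete_of_not_reduced cs ω hred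
      obtain ⟨ω', r1, r2, r3⟩ := ih ω₁ (by omega)
      exact ⟨ω', r1, fun b hb => h2 b (r2 b hb), by rw [r3, h3]⟩

theorem wordProd_mem_closure (D : Set B) (ω : List B) (hmem : ∀ b ∈ ω, b ∈ D) :
    π ω ∈ Subgroup.closure (cs.simple '' D) := by
  induction ω with
  | nil =>
    rw [wordProd_nil]
    exact one_mem _
  | cons i ω ih =>
    rw [wordProd_cons]
    exact mul_mem (Subgroup.subset_closure ⟨i, hmem i (List.mem_cons_self), rfl⟩)
      (ih fun b hb => hmem b (List.mem_cons_of_mem i hb))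

theorem exists_word_of_mem_closure (D : Set B) {v : W}
    (hv : v ∈ Subgroup.closure (cs.simple '' D)) :
    ∃ ω, (∀ b ∈ ω, b ∈ D) ∧ π ω = v := by
  refine Subgroup.closure_induction ?_ ?_ ?_ ?_ hv
  · rintro x ⟨i, hi, rfl⟩
    exact ⟨[i], by simpa using hi, by simp⟩
  · exact ⟨[], by simp, by simp⟩
  · rintro x y - - ⟨ω₁, m1, p1⟩ ⟨ω₂, m2, p2⟩
    refine ⟨ω₁ ++ ω₂, fun b hb => ?_, by rw [wordProd_append, p1, p2]⟩
    rcases List.mem_append.1 hb with h | h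
    exacts [m1 b h, m2 b h]
  · rintro x - ⟨ω₁, m1, p1⟩
    exact ⟨ω₁.reverse, fun b hb => m1 b (List.mem_reverse.1 hb),
      by rw [cs.wordProd_reverse, p1]⟩

theorem exists_reduced_word_subset (D : Set B) {v : W}
    (hv : v ∈ Subgroup.closure (cs.simple '' D)) :
    ∃ ω, cs.IsReduced ω ∧ (∀ b ∈ ω, b ∈ D) ∧ π ω = v := by
  obtain ⟨ω, hmem, hprod⟩ := exists_word_of_mem_closure cs D hv
  obtain ⟨ω', r1, r2, r3⟩ := exists_reduced_subword cs ω
  exact ⟨ω', r1, fun b hb => hmem b (r2 b hb), by rw [r3, hprod]⟩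

theorem exists_descent (D : Set B) {v : W} (hv : v ∈ Subgroup.closure (cs.simple '' D))
    (hne : v ≠ 1) : ∃ i ∈ D, ℓ (ss i * v) + 1 = ℓ v := by
  obtain ⟨ω, hred, hmem, hprod⟩ := exists_reduced_word_subset cs D hv
  cases ω with
  | nil =>
    exfalso
    apply hne
    rw [← hprod, wordProd_nil]
  | cons i ω =>
    refine ⟨i, hmem i (List.mem_cons_self), ?_⟩
    have h1 : ss i * v = π ω := by
      rw [← hprod, wordProd_cons, ← mul_assoc, cs.simple_mul_simple_self, one_mul]
    have h2 : ℓ (ss i * v) ≤ ω.length := by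
      rw [h1]
      exact cs.length_wordProd_le ω
    have h3 : ℓ v = ω.length + 1 := by
      have := hred
      rw [← hprod]
      show ℓ (π (i :: ω)) = ω.length + 1
      rw [show ℓ (π (i :: ω)) = (i :: ω).length from hred]
      simp
    rcases cs.length_simple_mul v i with h4 | h4 <;> omega

theorem stepC {w : W} {i : B} (hwi : ℓ (ss i * w) < ℓ w) {v : W}
    (hv : ℓ (ss i * v) = ℓ v + 1) (hadd : ℓ v + ℓ (v⁻¹ * w) = ℓ w) :
    ℓ (ss i * v) + ℓ ((ss i * v)⁻¹ * w) = ℓ w := by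
  obtain ⟨α, hαr, hαp⟩ := cs.exists_reduced_word' v
  obtain ⟨β, hβr, hβp⟩ := cs.exists_reduced_word' (v⁻¹ * w)
  have hαl : ℓ v = α.length := by rw [hαp]; exact hαr
  have hβl : ℓ (v⁻¹ * w) = β.length := by rw [hβp]; exact hβr
  have hprod : π (α ++ β) = w := by
    rw [wordProd_append, ← hαp, ← hβp, mul_inv_cancel_left]
  have hredc : cs.IsReduced (α ++ β) := by
    show ℓ (π (α ++ β)) = (α ++ β).length
    rw [hprod, List.length_append]
    omega
  obtain ⟨j, hj, hex⟩ := simple_exchange_left cs i (α ++ β) hredc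
    (by rw [hprod]; exact hwi)
  rw [List.length_append] at hj
  rcases lt_or_ge j α.length with hlt | hle
  · exfalso
    rw [List.eraseIdx_append_of_lt_length hlt, hprod, wordProd_append] at hex
    have hca : w = v * π β := by rw [← hβp, mul_inv_cancel_left]
    have hc2 : ss i * v * π β = π (α.eraseIdx j) * π β := by
      rw [mul_assoc, ← hca, hex]
    have hc3 : ss i * v = π (α.eraseIdx j) := mul_right_cancel hc2
    have hc4 : ℓ (ss i * v) ≤ (α.eraseIdx j).length := by
      rw [hc3]
      exact cs.length_wordProd_le _
    have hc5 : (α.eraseIdx j).length + 1 = α.length := List.length_eraseIdx_add_one hlt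
    omega
  · rw [List.eraseIdx_append_of_length_le hle, hprod, wordProd_append, ← hαp] at hex
    have hE : (ss i * v)⁻¹ * w = π (β.eraseIdx (j - α.length)) := by
      rw [mul_inv_rev, cs.inv_simple, mul_assoc, hex, ← mul_assoc, inv_mul_cancel, one_mul]
    have hb1 : ℓ ((ss i * v)⁻¹ * w) ≤ (β.eraseIdx (j - α.length)).length := by
      rw [hE]
      exact cs.length_wordProd_le _
    have hb2 : (β.eraseIdx (j - α.length)).length + 1 = β.length :=
      List.length_eraseIdx_add_one (by omega)
    have hb3 : ℓ w ≤ ℓ (ss i * v) + ℓ ((ss i * v)⁻¹ * w) := by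
      have h7 : (ss i * v) * ((ss i * v)⁻¹ * w) = w := mul_inv_cancel_left _ _
      calc ℓ w = ℓ ((ss i * v) * ((ss i * v)⁻¹ * w)) := by rw [h7]
        _ ≤ _ := cs.length_mul_le _ _
    omega

theorem lemmaC (D : Set B) {w : W} (hw : ∀ i ∈ D, ℓ (ss i * w) < ℓ w) :
    ∀ v ∈ Subgroup.closure (cs.simple '' D), ℓ v + ℓ (v⁻¹ * w) = ℓ w := by
  suffices H : ∀ ω : List B, cs.IsReduced ω → (∀ b ∈ ω, b ∈ D) →
      ℓ (π ω) + ℓ ((π ω)⁻¹ * w) = ℓ w by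
    intro v hv
    obtain ⟨ω, hred, hmem, hprod⟩ := exists_reduced_word_subset cs D hv
    rw [← hprod]
    exact H ω hred hmem
  intro ω
  induction ω with
  | nil =>
    intro _ _
    simp
  | cons i ω ih =>
    intro hred hmem
    have hred' : cs.IsReduced ω := by
      have h := hred.drop (j := 1)
      simpa using h
    have hlv : ℓ (π (i :: ω)) = ω.length + 1 := by
      rw [show ℓ (π (i :: ω)) = (i :: ω).length from hred]
      simp
    have hlv' : ℓ (π ω) = ω.length := hred'
    rw [wordProd_cons] at hlv ⊢
    exact stepC cs (hw i (hmem i (List.mem_cons_self))) (by omega)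
      (ih hred' fun b hb => hmem b (List.mem_cons_of_mem i hb))

theorem stepX (D : Set B) {x : W}
    (hmin : ∀ z ∈ Subgroup.closure (cs.simple '' D), ℓ x ≤ ℓ (z * x))
    {v : W} (hv : v ∈ Subgroup.closure (cs.simple '' D)) {i : B} (hi : i ∈ D)
    (hlen : ℓ (ss i * v) = ℓ v + 1) (hadd : ℓ (v * x) = ℓ v + ℓ x) :
    ℓ (ss i * v * x) = ℓ (ss i * v) + ℓ x := by
  rcases cs.length_simple_mul (v * x) i with h | h
  · rw [mul_assoc, h, hadd, hlen]
    ring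
  · exfalso
    obtain ⟨α, hαr, hαp⟩ := cs.exists_reduced_word' v
    obtain ⟨β, hβr, hβp⟩ := cs.exists_reduced_word' x
    have hαl : ℓ v = α.length := by rw [hαp]; exact hαr
    have hβl : ℓ x = β.length := by rw [hβp]; exact hβr
    have hprod : π (α ++ β) = v * x := by rw [wordProd_append, ← hαp, ← hβp]
    have hredc : cs.IsReduced (α ++ β) := by
      show ℓ (π (α ++ β)) = (α ++ β).length
      rw [hprod, List.length_append]
      omega
    obtain ⟨j, hj, hex⟩ := simple_exchange_left cs i (α ++ β) hredc
      (by rw [hprod]; omega)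
    rw [List.length_append] at hj
    rcases lt_or_ge j α.length with hlt | hle
    · rw [List.eraseIdx_append_of_lt_length hlt, hprod, wordProd_append, ← hβp] at hex
      have hc2 : ss i * v * x = π (α.eraseIdx j) * x := by rw [mul_assoc, hex]
      have hc3 : ss i * v = π (α.eraseIdx j) := mul_right_cancel hc2
      have hc4 : ℓ (ss i * v) ≤ (α.eraseIdx j).length := by
        rw [hc3]
        exact cs.length_wordProd_le _
      have hc5 : (α.eraseIdx j).length + 1 = α.length := List.length_eraseIdx_add_one hlt
      omega
    · rw [List.eraseIdx_append_of_length_le hle, hprod, wordProd_append, ← hαp] at hex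
      have hzmem : v⁻¹ * ss i * v ∈ Subgroup.closure (cs.simple '' D) :=
        mul_mem (mul_mem (inv_mem hv) (Subgroup.subset_closure ⟨i, hi, rfl⟩)) hv
      have hE : (v⁻¹ * ss i * v) * x = π (β.eraseIdx (j - α.length)) := by
        have h9 : (v⁻¹ * ss i * v) * x = v⁻¹ * (ss i * (v * x)) := by
          simp [mul_assoc]
        rw [h9, hex, inv_mul_cancel_left]
      have hb1 : ℓ ((v⁻¹ * ss i * v) * x) ≤ (β.eraseIdx (j - α.length)).length := by
        rw [hE]
        exact cs.length_wordProd_le _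
      have hb2 : (β.eraseIdx (j - α.length)).length + 1 = β.length :=
        List.length_eraseIdx_add_one (by omega)
      have := hmin _ hzmem
      omega

theorem lemmaX (D : Set B) {x : W}
    (hmin : ∀ z ∈ Subgroup.closure (cs.simple '' D), ℓ x ≤ ℓ (z * x)) :
    ∀ v ∈ Subgroup.closure (cs.simple '' D), ℓ (v * x) = ℓ v + ℓ x := by
  suffices H : ∀ ω : List B, cs.IsReduced ω → (∀ b ∈ ω, b ∈ D) →
      ℓ (π ω * x) = ℓ (π ω) + ℓ x by
    intro v hv
    obtain ⟨ω, hred, hmem, hprod⟩ := exists_reduced_word_subset cs D hv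
    rw [← hprod]
    exact H ω hred hmem
  intro ω
  induction ω with
  | nil =>
    intro _ _
    simp
  | cons i ω ih =>
    intro hred hmem
    have hred' : cs.IsReduced ω := by
      have h := hred.drop (j := 1)
      simpa using h
    have hlv : ℓ (π (i :: ω)) = ω.length + 1 := by
      rw [show ℓ (π (i :: ω)) = (i :: ω).length from hred]
      simp
    have hlv' : ℓ (π ω) = ω.length := hred'
    rw [wordProd_cons] at hlv ⊢
    exact stepX cs D hmin
      (wordProd_mem_closure cs D ω fun b hb => hmem b (List.mem_cons_of_mem i hb))
      (hmem i (List.mem_cons_self)) (by omega)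
      (ih hred' fun b hb => hmem b (List.mem_cons_of_mem i hb))

theorem length_apply_le (γ : MulAut W) (hγ : ⇑γ '' Set.range cs.simple = Set.range cs.simple)
    (v : W) : ℓ (γ v) ≤ ℓ v := by
  have hmap : ∀ i : B, ∃ i', γ (cs.simple i) = cs.simple i' := by
    intro i
    have h1 : γ (cs.simple i) ∈ ⇑γ '' Set.range cs.simple := ⟨cs.simple i, ⟨i, rfl⟩, rfl⟩
    rw [hγ] at h1
    obtain ⟨i', hi'⟩ := h1
    exact ⟨i', hi'.symm⟩
  choose σ hσ using hmap
  have hword : ∀ ω : List B, γ (π ω) = π (ω.map σ) := by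
    intro ω
    induction ω with
    | nil => simp
    | cons i ω ih => rw [wordProd_cons, map_mul, ih, hσ, List.map_cons, wordProd_cons]
  obtain ⟨ω, hlen, hprod⟩ := cs.exists_reduced_word v
  rw [hprod, hword]
  calc ℓ (π (ω.map σ)) ≤ (ω.map σ).length := cs.length_wordProd_le _
    _ = ω.length := List.length_map _
    _ = ℓ (π ω) := by rw [hlen]

end CoxAux


open CoxeterSystem

/-- The subgroup of fixed points of a group `Γ` of automorphisms of `W`. -/
def fixedSubgroup {W : Type*} [Group W] (Γ : Subgroup (MulAut W)) : Subgroup W where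
  carrier := {w | ∀ γ ∈ Γ, γ w = w}
  one_mem' := fun γ _ => map_one γ
  mul_mem' := fun {a b} ha hb γ hγ => by rw [map_mul, ha γ hγ, hb γ hγ]
  inv_mem' := fun {a} ha γ hγ => by rw [map_inv, ha γ hγ]

/-- `I` is a `Γ`-orbit on the set `S` of simple reflections of `(W, S)` such that the
standard parabolic subgroup `W_I` generated by `I` is finite. -/
def IsFinParabolicOrbit {B W : Type*} [Group W] {M : CoxeterMatrix B}
    (cs : CoxeterSystem M W) (Γ : Subgroup (MulAut W)) (I : Set W) : Prop :=
  (∃ s ∈ Set.range cs.simple, I = {t | ∃ γ ∈ Γ, γ s = t}) ∧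
    Finite ↥(Subgroup.closure I)

/-- `w` is the longest element of the standard parabolic subgroup `W_I` generated by `I`. -/
def IsLongestIn {B W : Type*} [Group W] {M : CoxeterMatrix B}
    (cs : CoxeterSystem M W) (I : Set W) (w : W) : Prop :=
  w ∈ Subgroup.closure I ∧ ∀ u ∈ Subgroup.closure I, cs.length u ≤ cs.length w

open CoxAux in
/-- if `w ∈ W^Γ`, `K = I ∪ J` for distinct `I, J ∈ S̄`, and `l(sw) < l(w)` for
all `s ∈ K`, then `W_K` is finite and in the decomposition `w = ux` (`u ∈ W_K`, `x ∈ X_K`,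
`l(w) = l(u) + l(x)`) one has `u = w_K ∈ W^Γ` and `x ∈ W^Γ`. -/
theorem coset_decomposition_fixed {B W : Type*} [Finite B] [Group W] {M : CoxeterMatrix B}
    (cs : CoxeterSystem M W) (Γ : Subgroup (MulAut W))
    (hΓ : ∀ γ ∈ Γ, ⇑γ '' Set.range cs.simple = Set.range cs.simple)
    (w : W) (hw : w ∈ fixedSubgroup Γ)
    (I J : Set W) (hI : IsFinParabolicOrbit cs Γ I) (hJ : IsFinParabolicOrbit cs Γ J)
    (hIJ : I ≠ J)
    (hdesc : ∀ s ∈ I ∪ J, cs.length (s * w) < cs.length w) :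
    Finite ↥(Subgroup.closure (I ∪ J)) ∧
      ∀ u x : W, u ∈ Subgroup.closure (I ∪ J) →
        (∀ s ∈ I ∪ J, cs.length x < cs.length (s * x)) →
        w = u * x → cs.length w = cs.length u + cs.length x →
        IsLongestIn cs (I ∪ J) u ∧ u ∈ fixedSubgroup Γ ∧ x ∈ fixedSubgroup Γ := by
  classical
  -- orbit stability
  have hstabI : ∀ γ' ∈ Γ, ∀ t ∈ I, γ' t ∈ I := by
    obtain ⟨s₀, hs₀, hIeq⟩ := hI.1
    intro γ' hγ' t ht
    rw [hIeq] at ht ⊢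
    obtain ⟨δ, hδ, rfl⟩ := ht
    exact ⟨γ' * δ, mul_mem hγ' hδ, rfl⟩
  have hstabJ : ∀ γ' ∈ Γ, ∀ t ∈ J, γ' t ∈ J := by
    obtain ⟨s₀, hs₀, hJeq⟩ := hJ.1
    intro γ' hγ' t ht
    rw [hJeq] at ht ⊢
    obtain ⟨δ, hδ, rfl⟩ := ht
    exact ⟨γ' * δ, mul_mem hγ' hδ, rfl⟩
  have hstabK : ∀ γ' ∈ Γ, ∀ t ∈ I ∪ J, γ' t ∈ I ∪ J := by
    intro γ' hγ' t ht
    rcases ht with ht | ht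
    · exact Or.inl (hstabI γ' hγ' t ht)
    · exact Or.inr (hstabJ γ' hγ' t ht)
  have hKrange : I ∪ J ⊆ Set.range cs.simple := by
    intro t ht
    rcases ht with ht | ht
    · obtain ⟨s₀, hs₀, hIeq⟩ := hI.1
      rw [hIeq] at ht
      obtain ⟨γ, hγ, rfl⟩ := ht
      rw [← hΓ γ hγ]
      exact ⟨s₀, hs₀, rfl⟩
    · obtain ⟨s₀, hs₀, hJeq⟩ := hJ.1
      rw [hJeq] at ht
      obtain ⟨γ, hγ, rfl⟩ := ht
      rw [← hΓ γ hγ]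
      exact ⟨s₀, hs₀, rfl⟩
  set D : Set B := cs.simple ⁻¹' (I ∪ J) with hD
  have hKD : cs.simple '' D = I ∪ J := Set.image_preimage_eq_of_subset hKrange
  have hClEq : Subgroup.closure (I ∪ J) = Subgroup.closure (cs.simple '' D) := by rw [hKD]
  have hdescD : ∀ i ∈ D, cs.length (cs.simple i * w) < cs.length w := fun i hi =>
    hdesc _ (Set.mem_preimage.1 hi)
  have hC := lemmaC cs D hdescD
  have hfin : (Subgroup.closure (cs.simple '' D) : Set W).Finite := by
    have h1 : (Subgroup.closure (cs.simple '' D) : Set W)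
        ⊆ cs.wordProd '' {ω : List B | ω.length ≤ cs.length w} := by
      intro v hv
      obtain ⟨ω, hred, hmem, hprod⟩ := exists_reduced_word_subset cs D hv
      refine ⟨ω, ?_, hprod⟩
      have h2 : cs.length (cs.wordProd ω) = ω.length := hred
      have h3 := hC v hv
      simp only [Set.mem_setOf_eq]
      rw [← h2, hprod]
      omega
    exact Set.Finite.subset (Set.Finite.image _ (List.finite_length_le B (cs.length w))) h1
  have hfin' : Finite ↥(Subgroup.closure (I ∪ J)) := by
    rw [hClEq]
    exact hfin.to_subtype
  refine ⟨hfin', ?_⟩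
  obtain ⟨u', hu'mem, hu'max⟩ := Set.exists_max_image
    (Subgroup.closure (cs.simple '' D) : Set W) cs.length hfin ⟨1, one_mem _⟩
  set x₀ : W := u'⁻¹ * w with hx₀
  have hu'add : cs.length u' + cs.length x₀ = cs.length w := hC u' hu'mem
  have hmin : ∀ z ∈ Subgroup.closure (cs.simple '' D),
      cs.length x₀ ≤ cs.length (z * x₀) := by
    intro z hz
    have hv'mem : u' * z⁻¹ ∈ Subgroup.closure (cs.simple '' D) :=
      mul_mem hu'mem (inv_mem hz)
    have h2 := hC _ hv'mem
    have h3 : (u' * z⁻¹)⁻¹ * w = z * x₀ := by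
      rw [hx₀, mul_inv_rev, inv_inv, mul_assoc]
    rw [h3] at h2
    have h4 := hu'max _ hv'mem
    omega
  have hX := lemmaX cs D hmin
  have uniq : ∀ u₁ x₁ : W, u₁ ∈ Subgroup.closure (cs.simple '' D) →
      (∀ i ∈ D, cs.length x₁ < cs.length (cs.simple i * x₁)) →
      w = u₁ * x₁ → u₁ = u' ∧ x₁ = x₀ := by
    intro u₁ x₁ hu₁ hx₁ heq
    have hveq : (u₁⁻¹ * u') * x₀ = x₁ := by
      rw [hx₀, mul_assoc, mul_inv_cancel_left, heq, inv_mul_cancel_left]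
    have hvmem : u₁⁻¹ * u' ∈ Subgroup.closure (cs.simple '' D) :=
      mul_mem (inv_mem hu₁) hu'mem
    by_cases hv1 : u₁⁻¹ * u' = 1
    · have hu : u₁ = u' := by
        have := congrArg (u₁ * ·) hv1
        simpa [mul_inv_cancel_left] using this.symm
      refine ⟨hu, ?_⟩
      rw [← hveq, hv1, one_mul]
    · exfalso
      obtain ⟨i, hiD, hdes⟩ := exists_descent cs D hvmem hv1
      have h5 := hX _ hvmem
      rw [hveq] at h5
      have h6 : cs.length (cs.simple i * x₁)
          ≤ cs.length (cs.simple i * (u₁⁻¹ * u')) + cs.length x₀ := by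
        have h7 : cs.simple i * x₁ = (cs.simple i * (u₁⁻¹ * u')) * x₀ := by
          rw [← hveq]
          simp [mul_assoc]
        rw [h7]
        exact cs.length_mul_le _ _
      have h8 := hx₁ i hiD
      omega
  intro u x hu hx heq _hadd
  have huD : u ∈ Subgroup.closure (cs.simple '' D) := by rw [← hClEq]; exact hu
  have hxD : ∀ i ∈ D, cs.length x < cs.length (cs.simple i * x) := fun i hi =>
    hx _ (Set.mem_preimage.1 hi)
  obtain ⟨huu, hxx⟩ := uniq u x huD hxD heq
  have hlenall : ∀ γ' ∈ Γ, ∀ v : W, cs.length (γ' v) = cs.length v := by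
    intro γ' hγ' v
    have h1 := length_apply_le cs γ' (hΓ γ' hγ') v
    have h2 := length_apply_le cs γ'⁻¹ (hΓ γ'⁻¹ (inv_mem hγ')) (γ' v)
    have h3 : (γ'⁻¹ : MulAut W) (γ' v) = v := by simp
    rw [h3] at h2
    omega
  have hfix : ∀ γ ∈ Γ, γ u = u ∧ γ x = x := by
    intro γ hγ
    have hmemγ : γ u ∈ Subgroup.closure (cs.simple '' D) := by
      rw [← hClEq]
      rw [← hClEq] at huD
      refine Subgroup.closure_induction ?_ ?_ ?_ ?_ huD
      · exact fun t ht => Subgroup.subset_closure (hstabK γ hγ t ht)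
      · rw [map_one]; exact one_mem _
      · intro a b _ _ ha hb
        rw [map_mul]
        exact mul_mem ha hb
      · intro a _ ha
        rw [map_inv]
        exact inv_mem ha
    have hxγ : ∀ i ∈ D, cs.length (γ x) < cs.length (cs.simple i * γ x) := by
      intro i hi
      have hsiK : cs.simple i ∈ I ∪ J := Set.mem_preimage.1 hi
      have hK2 : (γ⁻¹ : MulAut W) (cs.simple i) ∈ I ∪ J :=
        hstabK γ⁻¹ (inv_mem hγ) _ hsiK
      obtain ⟨i'', hi''⟩ := hKrange hK2
      have hi''D : i'' ∈ D := by
        rw [hD, Set.mem_preimage, hi'']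
        exact hK2
      have hcalc : cs.simple i * γ x = γ (cs.simple i'' * x) := by
        rw [map_mul, hi'']
        simp
      rw [hcalc, hlenall γ hγ, hlenall γ hγ]
      exact hx _ (Set.mem_preimage.1 hi''D)
    have heqγ : w = γ u * γ x := by
      calc w = γ w := (hw γ hγ).symm
        _ = γ (u * x) := by rw [← heq]
        _ = γ u * γ x := map_mul γ u x
    obtain ⟨h1, h2⟩ := uniq (γ u) (γ x) hmemγ hxγ heqγ
    exact ⟨by rw [h1, ← huu], by rw [h2, ← hxx]⟩
  refine ⟨⟨hu, ?_⟩, ?_, ?_⟩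
  · intro z hz
    rw [hClEq] at hz
    rw [huu]
    exact hu'max z hz
  · exact fun γ hγ => (hfix γ hγ).1
  · exact fun γ hγ => (hfix γ hγ).2
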